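/- Let T be a connected open surface obtained by removing a finite nonempty configuration of points from a surface (so T is homotopy equivalent to a compact subsurface S' ⊂ T with T − S' nonempty). Let F(T)_• be the semi-simplicial space whose i-simplices are unordered (i+1)-tuples of distinct points of T, with face maps forgetting a point. Then the geometric realisation ‖F(T)_•‖ is contractible. -/

import Mathlib

/-! ## Configuration spaces of `ξ`-element subsets ("`ξ`-configuration spaces") -/

/-- The ordered configuration space of points in `S` indexed by `ι`. -/
def OrdConf (ι : Type) (S : Type) [TopologicalSpace S] : Type :=
  {f : ι → S // Function.Injective f}

instance (ι S : Type) [TopologicalSpace S] : TopologicalSpace (OrdConf ι S) :=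
  instTopologicalSpaceSubtype

/-- The subgroup of block-preserving permutations of `Fin n × Fin ξ`: those permutations that
map each block `{i} × Fin ξ` onto some block `{σ i} × Fin ξ`. -/
def blockPerm (n ξ : ℕ) : Subgroup (Equiv.Perm (Fin n × Fin ξ)) where
  carrier := {π | ∃ σ : Equiv.Perm (Fin n), ∀ p, (π p).1 = σ p.1}
  one_mem' := ⟨1, fun _ => rfl⟩
  mul_mem' := by
    rintro a b ⟨σa, ha⟩ ⟨σb, hb⟩
    exact ⟨σa * σb, fun p => by
      simp only [Equiv.Perm.mul_apply]
      rw [ha, hb]⟩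
  inv_mem' := by
    rintro a ⟨σ, h⟩
    refine ⟨σ⁻¹, fun p => ?_⟩
    have := h (a⁻¹ p)
    simp only [← Equiv.Perm.mul_apply, mul_inv_cancel, Equiv.Perm.one_apply] at this
    rw [this, ← Equiv.Perm.mul_apply, inv_mul_cancel, Equiv.Perm.one_apply]

/-- Block-preserving permutations whose induced permutation of the blocks moreover preserves
the set of the first `m` blocks (i.e. respects the partition of the `n` blocks into the first
`m` and the remaining `n - m` ones). -/
def blockPermPart (n ξ m : ℕ) : Subgroup (Equiv.Perm (Fin n × Fin ξ)) where
  carrier := {π | ∃ σ : Equiv.Perm (Fin n),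
    (∀ p, (π p).1 = σ p.1) ∧ ∀ i : Fin n, ((σ i : ℕ) < m ↔ (i : ℕ) < m)}
  one_mem' := ⟨1, fun _ => rfl, fun _ => Iff.rfl⟩
  mul_mem' := by
    rintro a b ⟨σa, ha, ha'⟩ ⟨σb, hb, hb'⟩
    refine ⟨σa * σb, fun p => ?_, fun i => ?_⟩
    · simp only [Equiv.Perm.mul_apply]
      rw [ha, hb]
    · simp only [Equiv.Perm.mul_apply]
      rw [ha' (σb i), hb' i]
  inv_mem' := by
    rintro a ⟨σ, h, h'⟩
    refine ⟨σ⁻¹, fun p => ?_, fun i => ?_⟩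
    · have := h (a⁻¹ p)
      simp only [← Equiv.Perm.mul_apply, mul_inv_cancel, Equiv.Perm.one_apply] at this
      rw [this, ← Equiv.Perm.mul_apply, inv_mul_cancel, Equiv.Perm.one_apply]
    · have := h' (σ⁻¹ i)
      simp only [← Equiv.Perm.mul_apply, mul_inv_cancel, Equiv.Perm.one_apply] at this
      rw [← this]

theorem blockPermPart_le_blockPerm (n ξ m : ℕ) : blockPermPart n ξ m ≤ blockPerm n ξ := by
  rintro π ⟨σ, h, _⟩; exact ⟨σ, h⟩

/-- The equivalence relation on ordered configurations induced by a subgroup of permutations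
of the index set. -/
def confSetoid {ι : Type} (G : Subgroup (Equiv.Perm ι)) (S : Type) [TopologicalSpace S] :
    Setoid (OrdConf ι S) where
  r f g := ∃ π ∈ G, f.1 = g.1 ∘ π
  iseqv := by
    constructor
    · exact fun f => ⟨1, G.one_mem, rfl⟩
    · rintro f g ⟨π, hπ, h⟩
      refine ⟨π⁻¹, G.inv_mem hπ, ?_⟩
      funext x
      have := congrFun h (π⁻¹ x)
      simp only [Function.comp_apply, ← Equiv.Perm.mul_apply, mul_inv_cancel, Equiv.Perm.one_apply] at this ⊢
      rw [← this]
    · rintro f g h ⟨π, hπ, h1⟩ ⟨ρ, hρ, h2⟩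
      refine ⟨ρ * π, G.mul_mem hρ hπ, ?_⟩
      funext x
      simp only [h1, h2, Function.comp_apply, Equiv.Perm.mul_apply]

/-- The `ξ`-configuration space `Conf_n^ξ(S)`: configurations of `n` pairwise disjoint unordered
`ξ`-element subsets of `S`, realised as the quotient of the ordered configuration space of
`n·ξ` points of `S` (indexed by `Fin n × Fin ξ`) by the block-preserving permutations. -/
def ConfXi (S : Type) [TopologicalSpace S] (ξ n : ℕ) : Type :=
  Quotient (confSetoid (blockPerm n ξ) S)

instance (S : Type) [TopologicalSpace S] (ξ n : ℕ) : TopologicalSpace (ConfXi S ξ n) :=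
  instTopologicalSpaceQuotient

/-- The `ξ`-configuration space `Conf_{n,m}^ξ(S)` in which the `n` subsets are moreover
partitioned into a group of `m` subsets and a group of `n - m` subsets. -/
def ConfXiPart (S : Type) [TopologicalSpace S] (ξ n m : ℕ) : Type :=
  Quotient (confSetoid (blockPermPart n ξ m) S)

instance (S : Type) [TopologicalSpace S] (ξ n m : ℕ) : TopologicalSpace (ConfXiPart S ξ n m) :=
  instTopologicalSpaceQuotient

/-- A point of `S` belongs to (one of the subsets of) a `ξ`-configuration. -/
def memConf {S : Type} [TopologicalSpace S] {ξ n : ℕ} (s : S) (c : ConfXi S ξ n) : Prop :=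
  Quotient.lift (fun f : OrdConf (Fin n × Fin ξ) S => ∃ b, f.1 b = s)
    (by
      rintro f g ⟨π, _, h⟩
      simp only [eq_iff_iff]
      constructor
      · rintro ⟨b, hb⟩
        exact ⟨π b, by rw [← hb, h]; rfl⟩
      · rintro ⟨b, hb⟩
        refine ⟨π⁻¹ b, ?_⟩
        rw [← hb, h]
        simp) c

/-- The covering projection `Conf_{n,m}^ξ(S) → Conf_n^ξ(S)` which forgets the partition of the
`n` subsets into the two groups. -/
def confPartProj (S : Type) [TopologicalSpace S] (ξ n m : ℕ) :
    C(ConfXiPart S ξ n m, ConfXi S ξ n) where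
  toFun := Quotient.map' id (by
    rintro f g ⟨π, hπ, h⟩
    exact ⟨π, blockPermPart_le_blockPerm n ξ m hπ, h⟩)
  continuous_toFun := continuous_id.quotient_map' _

/-- Restriction of an ordered configuration to the first `m` blocks. -/
def ordRestrict {S : Type} [TopologicalSpace S] {ξ n : ℕ} (m : ℕ) (h : m ≤ n)
    (f : OrdConf (Fin n × Fin ξ) S) : OrdConf (Fin m × Fin ξ) S :=
  ⟨fun p => f.1 (⟨(p.1 : ℕ), lt_of_lt_of_le p.1.2 h⟩, p.2), by
    intro p q hpq
    have := f.2 hpq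
    have h1 : ((p.1 : ℕ)) = ((q.1 : ℕ)) := congrArg (fun z => ((z.1 : Fin n) : ℕ)) this
    have h2 : p.2 = q.2 := congrArg (fun z : Fin n × Fin ξ => z.2) this
    exact Prod.ext (Fin.ext h1) h2⟩


/-- Inclusion `Fin m × Fin ξ → Fin n × Fin ξ` of the first `m` blocks. -/
def blockEmb {ξ : Type} {n : ℕ} (m : ℕ) (h : m ≤ n) (p : Fin m × ξ) : Fin n × ξ :=
  (⟨(p.1 : ℕ), lt_of_lt_of_le p.1.2 h⟩, p.2)

theorem blockEmb_injective {ξ : Type} {n m : ℕ} (h : m ≤ n) :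
    Function.Injective (blockEmb (ξ := ξ) (n := n) m h) := by
  intro p q hpq
  have h1 : ((p.1 : ℕ)) = ((q.1 : ℕ)) := congrArg (fun z => ((z.1 : Fin n) : ℕ)) hpq
  have h2 : p.2 = q.2 := congrArg (fun z : Fin n × ξ => z.2) hpq
  exact Prod.ext (Fin.ext h1) h2

/-- The map `Conf_{n,m}^ξ(S) → Conf_m^ξ(S)` which forgets the group of the last `n - m`
subsets, remembering only the distinguished group of `m` subsets. -/
def confPartForget (S : Type) [TopologicalSpace S] (ξ n m : ℕ) (h : m ≤ n) :
    C(ConfXiPart S ξ n m, ConfXi S ξ m) where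
  toFun := Quotient.map' (ordRestrict m h) (by
    rintro f g ⟨π, ⟨σ, hσ, hpres⟩, hfg⟩
    have hmap : ∀ p : Fin m × Fin ξ, ((π (blockEmb m h p)).1 : ℕ) < m := by
      intro p
      rw [hσ]
      exact (hpres _).mpr p.1.2
    -- the restriction of `π` to the first `m` blocks, as a permutation
    set e : Fin m × Fin ξ → Fin m × Fin ξ :=
      fun p => (⟨((π (blockEmb m h p)).1 : ℕ), hmap p⟩, (π (blockEmb m h p)).2) with he
    have hembe : ∀ p, blockEmb m h (e p) = π (blockEmb m h p) := by
      intro p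
      apply Prod.ext
      · exact Fin.ext rfl
      · rfl
    have hinj : Function.Injective e := by
      intro p q hpq
      have : π (blockEmb m h p) = π (blockEmb m h q) := by
        rw [← hembe, ← hembe, hpq]
      exact blockEmb_injective h (π.injective this)
    set π' : Equiv.Perm (Fin m × Fin ξ) :=
      Equiv.ofBijective e (Finite.injective_iff_bijective.mp hinj) with hπ'
    have hπ'app : ∀ p, π' p = e p := fun _ => rfl
    -- the induced permutation of the first `m` block indices
    have hmapσ : ∀ i : Fin m, ((σ ⟨(i : ℕ), lt_of_lt_of_le i.2 h⟩ : Fin n) : ℕ) < m :=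
      fun i => (hpres _).mpr i.2
    have hinjσ : Function.Injective
        (fun i : Fin m => (⟨((σ ⟨(i : ℕ), lt_of_lt_of_le i.2 h⟩ : Fin n) : ℕ), hmapσ i⟩ : Fin m)) := by
      intro i j hij
      have hval : ((σ ⟨(i : ℕ), lt_of_lt_of_le i.2 h⟩ : Fin n) : ℕ)
          = ((σ ⟨(j : ℕ), lt_of_lt_of_le j.2 h⟩ : Fin n) : ℕ) :=
        congrArg (fun z : Fin m => (z : ℕ)) hij
      have := σ.injective (Fin.ext hval)
      exact Fin.ext (congrArg (fun z : Fin n => (z : ℕ)) this)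
    refine ⟨π', ⟨Equiv.ofBijective _ (Finite.injective_iff_bijective.mp hinjσ), fun p => ?_⟩, ?_⟩
    · show (e p).1 = _
      apply Fin.ext
      show ((π (blockEmb m h p)).1 : ℕ) = _
      rw [hσ]
      rfl
    · funext p
      show (ordRestrict m h f).1 p = (ordRestrict m h g).1 (π' p)
      show f.1 (blockEmb m h p) = g.1 (blockEmb m h (e p))
      rw [hembe, hfg]
      rfl)
  continuous_toFun := by
    apply Continuous.quotient_map'
    apply Continuous.subtype_mk
    exact continuous_pi fun p => (continuous_apply _).comp continuous_subtype_val

/-! ## The stabilisation map -/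

/-- Stabilisation data for a surface `S`: a self-embedding `e` of `S` that is isotopic to the
identity (through embeddings), together with a `ξ`-element subset `q` of `S` disjoint from the
image of `e`.  When `S` is the interior of a surface with boundary, such data is obtained by
pushing `S` off a collar neighbourhood of a boundary component and placing `q` in the freed-up
collar; the induced map on `ξ`-configuration spaces is the stabilisation map, which "adds `ξ`
trivial strands" on the level of `ξ`-braid groups. -/
structure StabData (S : Type) [TopologicalSpace S] (ξ : ℕ) where
  /-- the self-embedding of `S` -/
  e : S → S
  emb : Topology.IsEmbedding e
  /-- the added `ξ`-element subset, given as an injective tuple -/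
  q : Fin ξ → S
  hq : Function.Injective q
  disj : ∀ (j : Fin ξ) (s : S), q j ≠ e s
  /-- `e` is isotopic to the identity through embeddings -/
  isotopic : ∃ H : C(unitInterval × S, S),
    (∀ t : unitInterval, Topology.IsEmbedding (fun s => H (t, s))) ∧
      (∀ s, H (0, s) = s) ∧ (∀ s, H (1, s) = e s)

/-- The stabilisation map on ordered configurations: apply `e` to the existing points and
insert the new `ξ`-element subset `q` as the last block. -/
def stabOrd {S : Type} [TopologicalSpace S] {ξ : ℕ} (D : StabData S ξ) (n : ℕ)
    (f : OrdConf (Fin n × Fin ξ) S) : OrdConf (Fin (n + 1) × Fin ξ) S :=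
  ⟨fun p => if h : (p.1 : ℕ) < n then D.e (f.1 (⟨(p.1 : ℕ), h⟩, p.2)) else D.q p.2, by
    intro p p' hpp'
    by_cases h : (p.1 : ℕ) < n <;> by_cases h' : (p'.1 : ℕ) < n
    · simp only [dif_pos h, dif_pos h'] at hpp'
      have := f.2 (D.emb.injective hpp')
      have h1 : ((p.1 : ℕ)) = ((p'.1 : ℕ)) := congrArg (fun z => ((z.1 : Fin n) : ℕ)) this
      have h2 : p.2 = p'.2 := congrArg (fun z : Fin n × Fin ξ => z.2) this
      exact Prod.ext (Fin.ext h1) h2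
    · simp only [dif_pos h, dif_neg h'] at hpp'
      exact absurd hpp'.symm (D.disj _ _)
    · simp only [dif_neg h, dif_pos h'] at hpp'
      exact absurd hpp' (D.disj _ _)
    · simp only [dif_neg h, dif_neg h'] at hpp'
      have h2 := D.hq hpp'
      have h1 : ((p.1 : ℕ)) = ((p'.1 : ℕ)) := by omega
      exact Prod.ext (Fin.ext h1) h2⟩

/-- The stabilisation map `Conf_n^ξ(S) → Conf_{n+1}^ξ(S)` induced by stabilisation data. -/
def stabMap {S : Type} [TopologicalSpace S] {ξ : ℕ} (D : StabData S ξ) (n : ℕ) :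
    C(ConfXi S ξ n, ConfXi S ξ (n + 1)) where
  toFun := Quotient.map' (stabOrd D n) (by
    rintro f g ⟨π, ⟨σ, hσ⟩, hfg⟩
    -- extend `π` to `Fin (n+1) × Fin ξ` by the identity on the last block
    set eπ : Fin (n + 1) × Fin ξ → Fin (n + 1) × Fin ξ := fun p =>
      if h : (p.1 : ℕ) < n then
        (⟨((π (⟨(p.1 : ℕ), h⟩, p.2)).1 : ℕ), lt_trans (π (⟨(p.1 : ℕ), h⟩, p.2)).1.2 (Nat.lt_succ_self n)⟩,
          (π (⟨(p.1 : ℕ), h⟩, p.2)).2)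
      else p with heπ
    have hlt : ∀ (p : Fin (n+1) × Fin ξ) (h : (p.1 : ℕ) < n), ((eπ p).1 : ℕ) < n := by
      intro p h
      simp only [heπ, dif_pos h]
      exact (π (⟨(p.1 : ℕ), h⟩, p.2)).1.2
    have hge : ∀ (p : Fin (n+1) × Fin ξ), ¬ (p.1 : ℕ) < n → eπ p = p := by
      intro p h
      simp only [heπ, dif_neg h]
    have hinj : Function.Injective eπ := by
      intro p p' hpp'
      by_cases h : (p.1 : ℕ) < n <;> by_cases h' : (p'.1 : ℕ) < n
      · have e1 : eπ p = (⟨((π (⟨(p.1 : ℕ), h⟩, p.2)).1 : ℕ), _⟩, (π (⟨(p.1 : ℕ), h⟩, p.2)).2) :=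
          dif_pos h
        have e2 : eπ p' = (⟨((π (⟨(p'.1 : ℕ), h'⟩, p'.2)).1 : ℕ), _⟩, (π (⟨(p'.1 : ℕ), h'⟩, p'.2)).2) :=
          dif_pos h'
        rw [e1, e2] at hpp'
        have hv1 : ((π (⟨(p.1 : ℕ), h⟩, p.2)).1 : ℕ) = ((π (⟨(p'.1 : ℕ), h'⟩, p'.2)).1 : ℕ) :=
          congrArg (fun z => ((z.1 : Fin (n+1)) : ℕ)) hpp'
        have hv2 : (π (⟨(p.1 : ℕ), h⟩, p.2)).2 = (π (⟨(p'.1 : ℕ), h'⟩, p'.2)).2 :=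
          congrArg (fun z : Fin (n+1) × Fin ξ => z.2) hpp'
        have : π (⟨(p.1 : ℕ), h⟩, p.2) = π (⟨(p'.1 : ℕ), h'⟩, p'.2) :=
          Prod.ext (Fin.ext hv1) hv2
        have := π.injective this
        have h1 : ((p.1 : ℕ)) = ((p'.1 : ℕ)) := congrArg (fun z => ((z.1 : Fin n) : ℕ)) this
        have h2 : p.2 = p'.2 := congrArg (fun z : Fin n × Fin ξ => z.2) this
        exact Prod.ext (Fin.ext h1) h2
      · exfalso
        have := hlt p h
        rw [hpp', hge p' h'] at this
        exact h' this
      · exfalso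
        have := hlt p' h'
        rw [← hpp', hge p h] at this
        exact h this
      · rw [hge p h, hge p' h'] at hpp'
        exact hpp'
    set π' : Equiv.Perm (Fin (n+1) × Fin ξ) :=
      Equiv.ofBijective eπ (Finite.injective_iff_bijective.mp hinj) with hπ'
    -- the induced permutation of the `n+1` block indices
    set eσ : Fin (n + 1) → Fin (n + 1) := fun i =>
      if h : (i : ℕ) < n then ⟨((σ ⟨(i : ℕ), h⟩ : Fin n) : ℕ), lt_trans (σ ⟨(i : ℕ), h⟩).2 (Nat.lt_succ_self n)⟩
      else i with heσ
    have hinjσ : Function.Injective eσ := by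
      intro i j hij
      by_cases h : (i : ℕ) < n <;> by_cases h' : (j : ℕ) < n
      · have e1 : eσ i = ⟨((σ ⟨(i : ℕ), h⟩ : Fin n) : ℕ), _⟩ := dif_pos h
        have e2 : eσ j = ⟨((σ ⟨(j : ℕ), h'⟩ : Fin n) : ℕ), _⟩ := dif_pos h'
        rw [e1, e2] at hij
        have := σ.injective (Fin.ext (congrArg (fun z : Fin (n+1) => (z : ℕ)) hij))
        exact Fin.ext (congrArg (fun z : Fin n => (z : ℕ)) this)
      · exfalso
        have e1 : eσ i = ⟨((σ ⟨(i : ℕ), h⟩ : Fin n) : ℕ), _⟩ := dif_pos h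
        have e2 : eσ j = j := dif_neg h'
        rw [e1, e2] at hij
        have : ((σ ⟨(i : ℕ), h⟩ : Fin n) : ℕ) < n := (σ _).2
        rw [show ((σ ⟨(i : ℕ), h⟩ : Fin n) : ℕ) = (j : ℕ) from congrArg Fin.val hij] at this
        exact h' this
      · exfalso
        have e1 : eσ i = i := dif_neg h
        have e2 : eσ j = ⟨((σ ⟨(j : ℕ), h'⟩ : Fin n) : ℕ), _⟩ := dif_pos h'
        rw [e1, e2] at hij
        have : ((σ ⟨(j : ℕ), h'⟩ : Fin n) : ℕ) < n := (σ _).2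
        rw [show ((σ ⟨(j : ℕ), h'⟩ : Fin n) : ℕ) = (i : ℕ) from (congrArg Fin.val hij).symm] at this
        exact h this
      · have e1 : eσ i = i := dif_neg h
        have e2 : eσ j = j := dif_neg h'
        rw [e1, e2] at hij
        exact hij
    refine ⟨π', ⟨Equiv.ofBijective eσ (Finite.injective_iff_bijective.mp hinjσ), fun p => ?_⟩, ?_⟩
    · show (eπ p).1 = eσ p.1
      by_cases h : (p.1 : ℕ) < n
      · have e1 : eπ p = (⟨((π (⟨(p.1 : ℕ), h⟩, p.2)).1 : ℕ), _⟩, (π (⟨(p.1 : ℕ), h⟩, p.2)).2) :=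
          dif_pos h
        have e2 : eσ p.1 = ⟨((σ ⟨(p.1 : ℕ), h⟩ : Fin n) : ℕ), _⟩ := dif_pos h
        rw [e1, e2]
        exact Fin.ext (congrArg Fin.val (by rw [hσ]))
      · rw [hge p h, heσ]
        simp only [dif_neg h]
    · funext p
      show (stabOrd D n f).1 p = (stabOrd D n g).1 (eπ p)
      by_cases h : (p.1 : ℕ) < n
      · have e1 : eπ p = (⟨((π (⟨(p.1 : ℕ), h⟩, p.2)).1 : ℕ), _⟩, (π (⟨(p.1 : ℕ), h⟩, p.2)).2) :=
          dif_pos h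
        have hlt' : ((eπ p).1 : ℕ) < n := hlt p h
        show (if h : (p.1 : ℕ) < n then D.e (f.1 (⟨(p.1 : ℕ), h⟩, p.2)) else D.q p.2)
          = (if h : ((eπ p).1 : ℕ) < n then D.e (g.1 (⟨((eπ p).1 : ℕ), h⟩, (eπ p).2)) else D.q (eπ p).2)
        rw [dif_pos h, dif_pos hlt']
        congr 1
        have : f.1 (⟨(p.1 : ℕ), h⟩, p.2) = g.1 (π (⟨(p.1 : ℕ), h⟩, p.2)) := by
          rw [hfg]; rfl
        rw [this]
        have heq : ((⟨((eπ p).1 : ℕ), hlt'⟩, (eπ p).2) : Fin n × Fin ξ)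
            = π (⟨(p.1 : ℕ), h⟩, p.2) := by
          apply Prod.ext
          · exact Fin.ext (congrArg (fun z : Fin (n+1) × Fin ξ => ((z.1 : Fin (n+1)) : ℕ)) e1)
          · exact congrArg (fun z : Fin (n+1) × Fin ξ => z.2) e1
        rw [heq]
      · rw [hge p h]
        show (if h : (p.1 : ℕ) < n then D.e (f.1 (⟨(p.1 : ℕ), h⟩, p.2)) else D.q p.2)
          = (if h : (p.1 : ℕ) < n then D.e (g.1 (⟨(p.1 : ℕ), h⟩, p.2)) else D.q p.2)
        rw [dif_neg h, dif_neg h])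
  continuous_toFun := by
    apply Continuous.quotient_map'
    apply Continuous.subtype_mk
    apply continuous_pi
    intro p
    by_cases h : (p.1 : ℕ) < n
    · simp only [stabOrd, dif_pos h]
      exact D.emb.continuous.comp ((continuous_apply _).comp continuous_subtype_val)
    · simp only [stabOrd, dif_neg h]
      exact continuous_const

/-! ## Semi-simplicial spaces and their (fat) geometric realisation -/

open CategoryTheory

/-- A semi-simplicial space: a family of spaces `X n` (the `n`-simplices) with contravariant
functorial action of strictly monotone maps (order embeddings) `Fin (m+1) ↪o Fin (n+1)`;
the face maps are the actions of the coface embeddings `Fin.succAboveOrderEmb`. -/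
structure SemiSimplicialSpace where
  /-- the space of `n`-simplices -/
  obj : ℕ → TopCat
  /-- the contravariant action of order embeddings (generated by the face maps) -/
  map : ∀ {m n : ℕ}, (Fin (m + 1) ↪o Fin (n + 1)) → C(obj n, obj m)
  map_id : ∀ (n : ℕ) (x : obj n), map ((OrderIso.refl (Fin (n + 1))).toOrderEmbedding) x = x
  map_comp : ∀ {m n k : ℕ} (f : Fin (m + 1) ↪o Fin (n + 1)) (g : Fin (n + 1) ↪o Fin (k + 1))
    (x : obj k), map (f.trans g) x = map f (map g x)

/-- The `i`-th face map of a semi-simplicial space. -/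
def SemiSimplicialSpace.face (X : SemiSimplicialSpace) {n : ℕ} (i : Fin (n + 2)) :
    C(X.obj (n + 1), X.obj n) :=
  X.map (Fin.succAboveOrderEmb i)

/-- The standard topological `n`-simplex. -/
def TopSimplex (n : ℕ) : Type :=
  {t : Fin (n + 1) → ℝ // (∀ i, 0 ≤ t i) ∧ ∑ i, t i = 1}

instance (n : ℕ) : TopologicalSpace (TopSimplex n) := instTopologicalSpaceSubtype

/-- Pushforward of a point of the `m`-simplex along an order embedding (the affine map
induced by the corresponding inclusion of vertices). -/
def TopSimplex.push {m n : ℕ} (f : Fin (m + 1) ↪o Fin (n + 1)) (t : TopSimplex m) :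
    TopSimplex n :=
  ⟨fun j => ∑ i : Fin (m + 1), if f i = j then t.1 i else 0, by
    constructor
    · intro j
      apply Finset.sum_nonneg
      intro i _
      split
      · exact t.2.1 i
      · exact le_refl 0
    · rw [Finset.sum_comm]
      simp only [Finset.sum_ite_eq, Finset.mem_univ, if_true]
      exact t.2.2⟩

/-- The total space (before quotienting) of the geometric realisation. -/
abbrev SemiSimplicialSpace.Total (X : SemiSimplicialSpace) : Type :=
  Sigma (fun n : ℕ => (↥(X.obj n) × TopSimplex n))

/-- The realisation relation: `(m, X(f) x, t) ∼ (n, x, f_* t)` for all order embeddings. -/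
def SemiSimplicialSpace.Rel (X : SemiSimplicialSpace) : X.Total → X.Total → Prop :=
  fun a b => ∃ (m n : ℕ) (f : Fin (m + 1) ↪o Fin (n + 1)) (x : X.obj n) (t : TopSimplex m),
    a = ⟨m, (X.map f x, t)⟩ ∧ b = ⟨n, (x, TopSimplex.push f t)⟩

/-- The (fat) geometric realisation of a semi-simplicial space. -/
def SemiSimplicialSpace.Realization (X : SemiSimplicialSpace) : Type :=
  Quot X.Rel

instance (X : SemiSimplicialSpace) : TopologicalSpace X.Realization :=
  instTopologicalSpaceQuot

/-- A map of semi-simplicial spaces: levelwise maps commuting with the structure maps. -/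
structure SemiSimplicialMap (X Y : SemiSimplicialSpace) where
  app : ∀ n, C(X.obj n, Y.obj n)
  naturality : ∀ {m n : ℕ} (f : Fin (m + 1) ↪o Fin (n + 1)) (x : X.obj n),
    app m (X.map f x) = Y.map f (app n x)

/-- The map induced on geometric realisations by a map of semi-simplicial spaces. -/
def SemiSimplicialMap.realize {X Y : SemiSimplicialSpace} (φ : SemiSimplicialMap X Y) :
    C(X.Realization, Y.Realization) where
  toFun := Quot.lift (fun a => Quot.mk Y.Rel ⟨a.1, (φ.app a.1 a.2.1, a.2.2)⟩) (by
    rintro a b ⟨m, n, f, x, t, rfl, rfl⟩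
    apply Quot.sound
    refine ⟨m, n, f, φ.app n x, t, ?_, rfl⟩
    rw [φ.naturality f x])
  continuous_toFun := by
    apply continuous_quot_lift
    apply continuous_sigma
    intro n
    have hmk : Continuous (@Sigma.mk ℕ (fun k => (↥(Y.obj k) × TopSimplex k)) n) :=
      continuous_sigmaMk
    exact (continuous_quot_mk.comp
      (hmk.comp (((φ.app n).continuous.comp continuous_fst).prodMk continuous_snd)))

/-- An augmented semi-simplicial space: a semi-simplicial space with compatible maps to a
base space `B`; `aug n : X n → B` is the unique composite of face maps and the
augmentation map. -/
structure AugmentedSemiSimplicialSpace extends SemiSimplicialSpace where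
  B : TopCat
  aug : ∀ n, C(obj n, B)
  aug_compat : ∀ {m n : ℕ} (f : Fin (m + 1) ↪o Fin (n + 1)) (x : obj n),
    aug m (map f x) = aug n x

/-- The realisation of the augmentation: the canonical map `‖X_•‖ → B`. -/
def AugmentedSemiSimplicialSpace.augRealize (X : AugmentedSemiSimplicialSpace) :
    C(X.Realization, X.B) where
  toFun := Quot.lift (fun a => X.aug a.1 a.2.1) (by
    rintro a b ⟨m, n, f, x, t, rfl, rfl⟩
    exact X.aug_compat f x)
  continuous_toFun := by
    apply continuous_quot_lift
    apply continuous_sigma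
    intro n
    exact (X.aug n).continuous.comp continuous_fst

/-- The semi-simplicial space `F(T)_•` whose `i`-simplices are configurations of `i+1`
distinct points of `T` (tuples of distinct points; forgetting one of the points gives the
face maps — we use labelled tuples so that "forget the `j`-th point" is well defined). -/
def confResolution (T : Type) [TopologicalSpace T] : SemiSimplicialSpace where
  obj i := TopCat.of (OrdConf (Fin (i + 1)) T)
  map f := ⟨fun z => ⟨z.1 ∘ f, fun a b hab => f.injective (z.2 hab)⟩, by
    apply Continuous.subtype_mk
    exact continuous_pi fun j => (continuous_apply _).comp continuous_subtype_val⟩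
  map_id := fun n z => Subtype.ext rfl
  map_comp := fun f g z => Subtype.ext rfl

/-! ## Auxiliary: order embeddings -/

def lastEmb (n : ℕ) : Fin 1 ↪o Fin (n + 2) :=
  OrderEmbedding.ofStrictMono (fun _ => Fin.last (n + 1)) (by
    intro a b h
    have : a = b := Subsingleton.elim a b
    subst this
    exact absurd h (lt_irrefl _))

theorem lastEmb_apply (n : ℕ) (i : Fin 1) : lastEmb n i = Fin.last (n + 1) := rfl

def extEmb {m n : ℕ} (f : Fin (m + 1) ↪o Fin (n + 1)) : Fin (m + 2) ↪o Fin (n + 2) :=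
  OrderEmbedding.ofStrictMono
    (fun i => if h : (i : ℕ) < m + 1 then (f ⟨i, h⟩).castSucc else Fin.last (n + 1))
    (by
      intro i j hij
      have hij' : (i : ℕ) < (j : ℕ) := hij
      show (if h : (i : ℕ) < m + 1 then (f ⟨i, h⟩).castSucc else Fin.last (n + 1))
        < (if h : (j : ℕ) < m + 1 then (f ⟨j, h⟩).castSucc else Fin.last (n + 1))
      by_cases hi : (i : ℕ) < m + 1 <;> by_cases hj : (j : ℕ) < m + 1
      · rw [dif_pos hi, dif_pos hj, Fin.castSucc_lt_castSucc_iff]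
        exact f.strictMono (show (⟨(i : ℕ), hi⟩ : Fin (m + 1)) < ⟨(j : ℕ), hj⟩ from hij')
      · rw [dif_pos hi, dif_neg hj]
        exact Fin.castSucc_lt_last _
      · exact absurd hij' (by omega)
      · exact absurd hij' (by
          have h1 : (i : ℕ) < m + 2 := i.isLt
          have h2 : (j : ℕ) < m + 2 := j.isLt
          omega))

theorem extEmb_apply {m n : ℕ} (f : Fin (m + 1) ↪o Fin (n + 1)) (i : Fin (m + 2)) :
    extEmb f i = if h : (i : ℕ) < m + 1 then (f ⟨i, h⟩).castSucc else Fin.last (n + 1) := rfl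

theorem extEmb_castSucc {m n : ℕ} (f : Fin (m + 1) ↪o Fin (n + 1)) (i : Fin (m + 1)) :
    extEmb f i.castSucc = (f i).castSucc := by
  rw [extEmb_apply, dif_pos (show ((i.castSucc : Fin (m + 2)) : ℕ) < m + 1 by
    rw [Fin.coe_castSucc]; exact i.isLt)]
  exact congrArg (fun x => (f x).castSucc) (Fin.ext (Fin.coe_castSucc i))

theorem extEmb_last {m n : ℕ} (f : Fin (m + 1) ↪o Fin (n + 1)) :
    extEmb f (Fin.last (m + 1)) = Fin.last (n + 1) := by
  rw [extEmb_apply, dif_neg (by rw [Fin.val_last]; omega)]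

/-! ## Auxiliary: push computations -/

theorem push_apply {m n : ℕ} (f : Fin (m + 1) ↪o Fin (n + 1)) (u : TopSimplex m)
    (j : Fin (n + 1)) :
    (TopSimplex.push f u).1 j = ∑ i : Fin (m + 1), if f i = j then u.1 i else 0 := rfl

theorem push_apply_eq {m n : ℕ} (f : Fin (m + 1) ↪o Fin (n + 1)) (u : TopSimplex m)
    (i : Fin (m + 1)) (j : Fin (n + 1)) (hij : f i = j) :
    (TopSimplex.push f u).1 j = u.1 i := by
  subst hij
  rw [push_apply, Finset.sum_eq_single i (fun b _ hb => if_neg fun h => hb (f.injective h))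
    (fun h => absurd (Finset.mem_univ i) h), if_pos rfl]

theorem push_apply_ne {m n : ℕ} (f : Fin (m + 1) ↪o Fin (n + 1)) (u : TopSimplex m)
    (j : Fin (n + 1)) (h : ∀ i, f i ≠ j) : (TopSimplex.push f u).1 j = 0 := by
  rw [push_apply]
  exact Finset.sum_eq_zero fun i _ => if_neg (h i)

/-! ## The join operation on simplices -/

def joinPt {n : ℕ} (u : TopSimplex n) (t : unitInterval) : TopSimplex (n + 1) :=
  ⟨fun j => if h : (j : ℕ) < n + 1 then (1 - (t : ℝ)) * u.1 ⟨j, h⟩ else (t : ℝ), by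
    constructor
    · intro j
      show 0 ≤ if h : (j : ℕ) < n + 1 then (1 - (t : ℝ)) * u.1 ⟨j, h⟩ else (t : ℝ)
      split
      · exact mul_nonneg (by have := t.2.2; linarith) (u.2.1 _)
      · exact t.2.1
    · show (∑ j : Fin (n + 2),
        if h : (j : ℕ) < n + 1 then (1 - (t : ℝ)) * u.1 ⟨j, h⟩ else (t : ℝ)) = 1
      rw [Fin.sum_univ_castSucc]
      have h1 : ∀ j : Fin (n + 1),
          (if h : ((j.castSucc : Fin (n + 2)) : ℕ) < n + 1 then (1 - (t : ℝ)) * u.1 ⟨_, h⟩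
            else (t : ℝ)) = (1 - (t : ℝ)) * u.1 j := by
        intro j
        rw [dif_pos (show ((j.castSucc : Fin (n + 2)) : ℕ) < n + 1 by
          rw [Fin.coe_castSucc]; exact j.isLt)]
        exact congrArg (fun x => (1 - (t : ℝ)) * u.1 x) (Fin.ext (Fin.coe_castSucc j))
      have h2 : (if h : ((Fin.last (n + 1) : Fin (n + 2)) : ℕ) < n + 1
          then (1 - (t : ℝ)) * u.1 ⟨_, h⟩ else (t : ℝ)) = (t : ℝ) := by
        rw [dif_neg (by rw [Fin.val_last]; omega)]
      rw [h2, Finset.sum_congr rfl fun j _ => h1 j, ← Finset.mul_sum, u.2.2]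
      ring⟩

theorem joinPt_apply_lt {n : ℕ} (u : TopSimplex n) (t : unitInterval) (j : Fin (n + 2))
    (h : (j : ℕ) < n + 1) : (joinPt u t).1 j = (1 - (t : ℝ)) * u.1 ⟨(j : ℕ), h⟩ := by
  show (if h' : (j : ℕ) < n + 1 then (1 - (t : ℝ)) * u.1 ⟨j, h'⟩ else (t : ℝ)) = _
  rw [dif_pos h]

theorem joinPt_apply_ge {n : ℕ} (u : TopSimplex n) (t : unitInterval) (j : Fin (n + 2))
    (h : ¬ (j : ℕ) < n + 1) : (joinPt u t).1 j = (t : ℝ) := by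
  show (if h' : (j : ℕ) < n + 1 then (1 - (t : ℝ)) * u.1 ⟨j, h'⟩ else (t : ℝ)) = _
  rw [dif_neg h]

theorem push_castEmb {n : ℕ} (u : TopSimplex n) :
    TopSimplex.push (Fin.castSuccOrderEmb : Fin (n + 1) ↪o Fin (n + 2)) u = joinPt u 0 := by
  apply Subtype.ext
  funext j
  by_cases hj : (j : ℕ) < n + 1
  · rw [push_apply_eq _ u ⟨(j : ℕ), hj⟩ j (Fin.ext rfl), joinPt_apply_lt u 0 j hj]
    show u.1 _ = (1 - ((0 : unitInterval) : ℝ)) * u.1 _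
    norm_num
  · rw [push_apply_ne _ _ _ (fun i h => hj (by
      rw [← h]
      show ((i.castSucc : Fin (n + 2)) : ℕ) < n + 1
      rw [Fin.coe_castSucc]; exact i.isLt)), joinPt_apply_ge u 0 j hj]
    rfl

def simplexPt : TopSimplex 0 :=
  ⟨fun _ => 1, ⟨fun _ => zero_le_one, by simp⟩⟩

theorem push_lastEmb {n : ℕ} (u : TopSimplex n) :
    TopSimplex.push (lastEmb n) simplexPt = joinPt u 1 := by
  apply Subtype.ext
  funext j
  by_cases hj : (j : ℕ) < n + 1
  · rw [push_apply_ne _ _ _ (fun i h => by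
      rw [← h, lastEmb_apply, Fin.val_last] at hj; omega), joinPt_apply_lt u 1 j hj]
    show (0 : ℝ) = (1 - ((1 : unitInterval) : ℝ)) * u.1 _
    norm_num
  · rw [push_apply_eq _ _ 0 j (by
      rw [lastEmb_apply]
      exact Fin.ext (by rw [Fin.val_last]; have := j.isLt; omega)),
      joinPt_apply_ge u 1 j hj]
    rfl


/-! ## Contraction data -/

structure ContractionData (T : Type) [TopologicalSpace T] : Type where
  H : unitInterval × T → T
  cont : Continuous H
  inj : ∀ t : unitInterval, Function.Injective fun x => H (t, x)
  h0 : ∀ x, H (0, x) = x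
  q : T
  hq : ∀ x, H (1, x) ≠ q

section Part2

variable {T : Type} [TopologicalSpace T] (D : ContractionData T)

/-- Applying the time-`t` map of the contraction to a configuration. -/
def hmap (t : unitInterval) {k : ℕ} (z : OrdConf (Fin k) T) : OrdConf (Fin k) T :=
  ⟨fun i => D.H (t, z.1 i), fun i j hij => z.2 (D.inj t hij)⟩

/-- The cone operator on configurations. -/
def coneC {n : ℕ} (z : OrdConf (Fin (n + 1)) T) : OrdConf (Fin (n + 2)) T :=
  ⟨fun i => if h : (i : ℕ) < n + 1 then D.H (1, z.1 ⟨i, h⟩) else D.q, by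
    intro i j hij
    replace hij : (if h : (i : ℕ) < n + 1 then D.H (1, z.1 ⟨i, h⟩) else D.q)
      = (if h : (j : ℕ) < n + 1 then D.H (1, z.1 ⟨j, h⟩) else D.q) := hij
    by_cases hi : (i : ℕ) < n + 1 <;> by_cases hj : (j : ℕ) < n + 1
    · rw [dif_pos hi, dif_pos hj] at hij
      have := z.2 (D.inj 1 hij)
      rw [Fin.mk.injEq] at this
      exact Fin.ext this
    · rw [dif_pos hi, dif_neg hj] at hij
      exact absurd hij (D.hq _)
    · rw [dif_neg hi, dif_pos hj] at hij
      exact absurd hij.symm (D.hq _)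
    · have h1 : (i : ℕ) < n + 2 := i.isLt
      have h2 : (j : ℕ) < n + 2 := j.isLt
      exact Fin.ext (by omega)⟩

theorem coneC_apply_lt {n : ℕ} (z : OrdConf (Fin (n + 1)) T) (i : Fin (n + 2))
    (h : (i : ℕ) < n + 1) : (coneC D z).1 i = D.H (1, z.1 ⟨(i : ℕ), h⟩) := by
  show (if h' : (i : ℕ) < n + 1 then D.H (1, z.1 ⟨i, h'⟩) else D.q) = _
  rw [dif_pos h]

theorem coneC_apply_ge {n : ℕ} (z : OrdConf (Fin (n + 1)) T) (i : Fin (n + 2))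
    (h : ¬ (i : ℕ) < n + 1) : (coneC D z).1 i = D.q := by
  show (if h' : (i : ℕ) < n + 1 then D.H (1, z.1 ⟨i, h'⟩) else D.q) = _
  rw [dif_neg h]

/-- The one-point configuration at `D.q`. -/
def qConf : OrdConf (Fin 1) T :=
  ⟨fun _ => D.q, fun i j _ => Subsingleton.elim i j⟩

theorem map_extEmb_cone {m n : ℕ} (f : Fin (m + 1) ↪o Fin (n + 1))
    (z : OrdConf (Fin (n + 1)) T) :
    (confResolution T).map (extEmb f) (coneC D z) = coneC D ((confResolution T).map f z) := by
  apply Subtype.ext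
  funext i
  show (coneC D z).1 (extEmb f i) = (coneC D ((confResolution T).map f z)).1 i
  by_cases hi : (i : ℕ) < m + 1
  · have h1 : extEmb f i = (f ⟨(i : ℕ), hi⟩).castSucc := dif_pos hi
    erw [h1, coneC_apply_lt D z _ (by rw [Fin.coe_castSucc]; exact (f ⟨(i : ℕ), hi⟩).isLt),
      coneC_apply_lt D _ i hi]
    exact congrArg (fun x => D.H (1, z.1 x)) (Fin.ext (Fin.coe_castSucc _))
  · have h1 : extEmb f i = Fin.last (n + 1) := dif_neg hi
    erw [h1, coneC_apply_ge D z _ (by rw [Fin.val_last]; omega), coneC_apply_ge D _ i hi]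

theorem push_extEmb_join {m n : ℕ} (f : Fin (m + 1) ↪o Fin (n + 1)) (u : TopSimplex m)
    (t : unitInterval) :
    TopSimplex.push (extEmb f) (joinPt u t) = joinPt (TopSimplex.push f u) t := by
  apply Subtype.ext
  funext j
  by_cases hj : (j : ℕ) < n + 1
  · rw [joinPt_apply_lt _ t j hj]
    by_cases hex : ∃ i : Fin (m + 1), f i = ⟨(j : ℕ), hj⟩
    · obtain ⟨i, hi⟩ := hex
      have h1 : extEmb f i.castSucc = j := by
        rw [extEmb_castSucc, hi]
        exact Fin.ext rfl
      rw [push_apply_eq _ _ i.castSucc j h1, push_apply_eq f u i _ hi,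
        joinPt_apply_lt u t _ (by rw [Fin.coe_castSucc]; exact i.isLt)]
      congr 1
    · rw [push_apply_ne _ _ _ (fun i' h => by
        by_cases hi' : (i' : ℕ) < m + 1
        · have h2 : i' = (⟨(i' : ℕ), hi'⟩ : Fin (m + 1)).castSucc := Fin.ext rfl
          rw [h2, extEmb_castSucc] at h
          exact hex ⟨⟨(i' : ℕ), hi'⟩, Fin.ext (by
            have := congrArg Fin.val h
            rwa [Fin.coe_castSucc] at this)⟩
        · have h2 : i' = Fin.last (m + 1) := Fin.ext (by
            rw [Fin.val_last]; have := i'.isLt; omega)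
          rw [h2, extEmb_last] at h
          have := congrArg Fin.val h
          rw [Fin.val_last] at this
          omega),
        push_apply_ne f u _ (fun i h => hex ⟨i, h⟩), mul_zero]
  · have h1 : extEmb f (Fin.last (m + 1)) = j := by
      rw [extEmb_last]
      exact Fin.ext (by rw [Fin.val_last]; have := j.isLt; omega)
    rw [push_apply_eq _ _ _ j h1, joinPt_apply_ge _ t j hj,
      joinPt_apply_ge u t _ (by rw [Fin.val_last]; omega)]

theorem map_castEmb_cone {n : ℕ} (z : OrdConf (Fin (n + 1)) T) :
    (confResolution T).map (Fin.castSuccOrderEmb : Fin (n + 1) ↪o Fin (n + 2)) (coneC D z)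
      = hmap D 1 z := by
  apply Subtype.ext
  funext i
  show (coneC D z).1 i.castSucc = D.H (1, z.1 i)
  rw [coneC_apply_lt D z _ (by rw [Fin.coe_castSucc]; exact i.isLt)]
  exact congrArg (fun x => D.H (1, z.1 x)) (Fin.ext (Fin.coe_castSucc _))

theorem map_lastEmb_cone {n : ℕ} (z : OrdConf (Fin (n + 1)) T) :
    (confResolution T).map (lastEmb n) (coneC D z) = qConf D := by
  apply Subtype.ext
  funext i
  show (coneC D z).1 (lastEmb n i) = D.q
  rw [lastEmb_apply, coneC_apply_ge D z _ (by rw [Fin.val_last]; omega)]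


/-! ## Maps and homotopies on the realisation -/

/-- The endpoint map `‖F(T)‖ → ‖F(T)‖` induced by the embedding `H(1, ·)`. -/
def phibar : C((confResolution T).Realization, (confResolution T).Realization) where
  toFun := Quot.lift (fun a => Quot.mk _ ⟨a.1, (hmap D 1 a.2.1, a.2.2)⟩) (by
    rintro a b ⟨m, n, f, x, t, rfl, rfl⟩
    have h : hmap D 1 ((confResolution T).map f x) = (confResolution T).map f (hmap D 1 x) :=
      Subtype.ext rfl
    calc Quot.mk _ (⟨m, (hmap D 1 ((confResolution T).map f x), t)⟩ : (confResolution T).Total)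
        = Quot.mk _ ⟨m, ((confResolution T).map f (hmap D 1 x), t)⟩ := by rw [h]
      _ = Quot.mk _ ⟨n, (hmap D 1 x, TopSimplex.push f t)⟩ :=
          Quot.sound ⟨m, n, f, hmap D 1 x, t, rfl, rfl⟩)
  continuous_toFun := by
    apply continuous_quot_lift
    apply continuous_sigma
    intro n
    have hmk : Continuous (@Sigma.mk ℕ
        (fun k => (↥((confResolution T).obj k) × TopSimplex k)) n) := continuous_sigmaMk
    have hc : Continuous (fun z : OrdConf (Fin (n + 1)) T => hmap D 1 z) := by
      apply Continuous.subtype_mk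
      apply continuous_pi
      intro i
      exact D.cont.comp (continuous_const.prodMk
        ((continuous_apply i).comp continuous_subtype_val))
    exact continuous_quot_mk.comp (hmk.comp ((hc.comp continuous_fst).prodMk continuous_snd))

/-- The pieces of the sliding homotopy. -/
def KmapC (n : ℕ) :
    C((OrdConf (Fin (n + 1)) T × TopSimplex n) × unitInterval, (confResolution T).Realization) where
  toFun := fun p => Quot.mk _ ⟨n, (hmap D p.2 p.1.1, p.1.2)⟩
  continuous_toFun := by
    have hmk : Continuous (@Sigma.mk ℕ
        (fun k => (↥((confResolution T).obj k) × TopSimplex k)) n) := continuous_sigmaMk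
    have hc : Continuous (fun p : (OrdConf (Fin (n + 1)) T × TopSimplex n) × unitInterval =>
        hmap D p.2 p.1.1) := by
      apply Continuous.subtype_mk
      apply continuous_pi
      intro i
      exact D.cont.comp (continuous_snd.prodMk ((continuous_apply i).comp
        (continuous_subtype_val.comp (continuous_fst.comp continuous_fst))))
    exact continuous_quot_mk.comp (hmk.comp (hc.prodMk (continuous_snd.comp continuous_fst)))

/-- The sliding homotopy, in curried form. -/
def Klift : C((confResolution T).Realization, C(unitInterval, (confResolution T).Realization)) where
  toFun := Quot.lift (fun a => (KmapC D a.1).curry a.2) (by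
    rintro a b ⟨m, n, f, x, t, rfl, rfl⟩
    apply ContinuousMap.ext
    intro s
    show Quot.mk _ (⟨m, (hmap D s ((confResolution T).map f x), t)⟩ : (confResolution T).Total)
      = Quot.mk _ ⟨n, (hmap D s x, TopSimplex.push f t)⟩
    have h : hmap D s ((confResolution T).map f x) = (confResolution T).map f (hmap D s x) :=
      Subtype.ext rfl
    calc Quot.mk _ (⟨m, (hmap D s ((confResolution T).map f x), t)⟩ : (confResolution T).Total)
        = Quot.mk _ ⟨m, ((confResolution T).map f (hmap D s x), t)⟩ := by rw [h]
      _ = Quot.mk _ ⟨n, (hmap D s x, TopSimplex.push f t)⟩ :=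
          Quot.sound ⟨m, n, f, hmap D s x, t, rfl, rfl⟩)
  continuous_toFun := by
    apply continuous_quot_lift
    apply continuous_sigma
    intro n
    exact (KmapC D n).curry.continuous.comp continuous_id

theorem klift_eq (a : (confResolution T).Total) :
    Klift D (Quot.mk (confResolution T).Rel a) = (KmapC D a.1).curry a.2 := rfl

theorem klift_zero (a : (confResolution T).Total) :
    Klift D (Quot.mk (confResolution T).Rel a) 0 = Quot.mk (confResolution T).Rel a := by
  have h : hmap D 0 a.2.1 = a.2.1 := Subtype.ext (funext fun i => D.h0 _)
  calc (show Quot (confResolution T).Rel from Klift D (Quot.mk (confResolution T).Rel a) 0)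
      = (show Quot (confResolution T).Rel from ((KmapC D a.1).curry a.2) 0) := by rw [klift_eq]
    _ = Quot.mk (confResolution T).Rel ⟨a.1, (hmap D 0 a.2.1, a.2.2)⟩ := rfl
    _ = Quot.mk (confResolution T).Rel a := by rw [h]

theorem klift_one (a : (confResolution T).Total) :
    Klift D (Quot.mk (confResolution T).Rel a) 1
      = phibar D (Quot.mk (confResolution T).Rel a) := by
  calc (show Quot (confResolution T).Rel from Klift D (Quot.mk (confResolution T).Rel a) 1)
      = (show Quot (confResolution T).Rel from ((KmapC D a.1).curry a.2) 1) := by rw [klift_eq]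
    _ = (show Quot (confResolution T).Rel from phibar D (Quot.mk (confResolution T).Rel a)) := rfl

/-- The sliding homotopy: `id ≃ phibar`. -/
def homK : ContinuousMap.Homotopy (ContinuousMap.id (confResolution T).Realization) (phibar D) where
  toFun := fun p => Klift D p.2 p.1
  continuous_toFun := (ContinuousMap.continuous_uncurry_of_continuous (Klift D)).comp
    (continuous_snd.prodMk continuous_fst)
  map_zero_left := by
    intro x
    induction x using Quot.ind with
    | _ a => exact klift_zero D a
  map_one_left := by
    intro x
    induction x using Quot.ind with
    | _ a => exact klift_one D a

/-- The pieces of the cone homotopy. -/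
def GmapC (n : ℕ) :
    C((OrdConf (Fin (n + 1)) T × TopSimplex n) × unitInterval, (confResolution T).Realization) where
  toFun := fun p => Quot.mk _ ⟨n + 1, (coneC D p.1.1, joinPt p.1.2 p.2)⟩
  continuous_toFun := by
    have hmk : Continuous (@Sigma.mk ℕ
        (fun k => (↥((confResolution T).obj k) × TopSimplex k)) (n + 1)) := continuous_sigmaMk
    have hc : Continuous (fun p : (OrdConf (Fin (n + 1)) T × TopSimplex n) × unitInterval =>
        coneC D p.1.1) := by
      apply Continuous.subtype_mk
      apply continuous_pi
      intro i
      by_cases h : (i : ℕ) < n + 1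
      · simp only [coneC, dif_pos h]
        exact D.cont.comp (continuous_const.prodMk ((continuous_apply _).comp
          (continuous_subtype_val.comp (continuous_fst.comp continuous_fst))))
      · simp only [coneC, dif_neg h]
        exact continuous_const
    have hj : Continuous (fun p : (OrdConf (Fin (n + 1)) T × TopSimplex n) × unitInterval =>
        joinPt p.1.2 p.2) := by
      apply Continuous.subtype_mk
      apply continuous_pi
      intro j
      by_cases h : (j : ℕ) < n + 1
      · simp only [joinPt, dif_pos h]
        exact ((continuous_const.sub (continuous_subtype_val.comp continuous_snd)).mul
          ((continuous_apply _).comp (continuous_subtype_val.comp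
            (continuous_snd.comp continuous_fst))))
      · simp only [joinPt, dif_neg h]
        exact continuous_subtype_val.comp continuous_snd
    exact continuous_quot_mk.comp (hmk.comp (hc.prodMk hj))

/-- The cone homotopy, in curried form. -/
def Glift : C((confResolution T).Realization, C(unitInterval, (confResolution T).Realization)) where
  toFun := Quot.lift (fun a => (GmapC D a.1).curry a.2) (by
    rintro a b ⟨m, n, f, x, t, rfl, rfl⟩
    apply ContinuousMap.ext
    intro s
    show Quot.mk _ (⟨m + 1, (coneC D ((confResolution T).map f x), joinPt t s)⟩ :
        (confResolution T).Total)
      = Quot.mk _ ⟨n + 1, (coneC D x, joinPt (TopSimplex.push f t) s)⟩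
    calc Quot.mk _ (⟨m + 1, (coneC D ((confResolution T).map f x), joinPt t s)⟩ :
          (confResolution T).Total)
        = Quot.mk _ ⟨m + 1, ((confResolution T).map (extEmb f) (coneC D x), joinPt t s)⟩ := by
          erw [map_extEmb_cone]
      _ = Quot.mk _ ⟨n + 1, (coneC D x, TopSimplex.push (extEmb f) (joinPt t s))⟩ :=
          Quot.sound ⟨m + 1, n + 1, extEmb f, coneC D x, joinPt t s, rfl, rfl⟩
      _ = Quot.mk _ ⟨n + 1, (coneC D x, joinPt (TopSimplex.push f t) s)⟩ := by
          rw [push_extEmb_join])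
  continuous_toFun := by
    apply continuous_quot_lift
    apply continuous_sigma
    intro n
    exact (GmapC D n).curry.continuous.comp continuous_id

/-- The cone point of the realisation. -/
def conePoint : (confResolution T).Realization :=
  Quot.mk _ ⟨0, (qConf D, simplexPt)⟩

/-- The cone homotopy: `phibar ≃ const`. -/
theorem glift_eq (a : (confResolution T).Total) :
    Glift D (Quot.mk (confResolution T).Rel a) = (GmapC D a.1).curry a.2 := rfl

theorem glift_zero (a : (confResolution T).Total) :
    Glift D (Quot.mk (confResolution T).Rel a) 0
      = phibar D (Quot.mk (confResolution T).Rel a) := by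
  calc (show Quot (confResolution T).Rel from Glift D (Quot.mk (confResolution T).Rel a) 0)
      = (show Quot (confResolution T).Rel from ((GmapC D a.1).curry a.2) 0) := by rw [glift_eq]
    _ = Quot.mk (confResolution T).Rel (⟨a.1 + 1, (coneC D a.2.1, joinPt a.2.2 0)⟩ :
          (confResolution T).Total) := rfl
    _ = Quot.mk (confResolution T).Rel ⟨a.1 + 1, (coneC D a.2.1,
          TopSimplex.push (Fin.castSuccOrderEmb : Fin (a.1 + 1) ↪o Fin (a.1 + 2)) a.2.2)⟩ := by
        rw [push_castEmb]
    _ = Quot.mk (confResolution T).Rel ⟨a.1, ((confResolution T).map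
          (Fin.castSuccOrderEmb : Fin (a.1 + 1) ↪o Fin (a.1 + 2)) (coneC D a.2.1), a.2.2)⟩ :=
        (Quot.sound ⟨a.1, a.1 + 1, Fin.castSuccOrderEmb, coneC D a.2.1, a.2.2, rfl, rfl⟩).symm
    _ = Quot.mk (confResolution T).Rel ⟨a.1, (hmap D 1 a.2.1, a.2.2)⟩ := by erw [map_castEmb_cone]
    _ = (show Quot (confResolution T).Rel from phibar D (Quot.mk (confResolution T).Rel a)) := rfl

theorem glift_one (a : (confResolution T).Total) :
    Glift D (Quot.mk (confResolution T).Rel a) 1 = conePoint D := by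
  calc (show Quot (confResolution T).Rel from Glift D (Quot.mk (confResolution T).Rel a) 1)
      = (show Quot (confResolution T).Rel from ((GmapC D a.1).curry a.2) 1) := by rw [glift_eq]
    _ = Quot.mk (confResolution T).Rel (⟨a.1 + 1, (coneC D a.2.1, joinPt a.2.2 1)⟩ :
          (confResolution T).Total) := rfl
    _ = Quot.mk (confResolution T).Rel ⟨a.1 + 1,
          (coneC D a.2.1, TopSimplex.push (lastEmb a.1) simplexPt)⟩ := by
        rw [push_lastEmb]
    _ = Quot.mk (confResolution T).Rel ⟨0,
          ((confResolution T).map (lastEmb a.1) (coneC D a.2.1), simplexPt)⟩ :=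
        (Quot.sound ⟨0, a.1 + 1, lastEmb a.1, coneC D a.2.1, simplexPt, rfl, rfl⟩).symm
    _ = (show Quot (confResolution T).Rel from conePoint D) := by erw [map_lastEmb_cone]; rfl

/-- The cone homotopy: `phibar ≃ const`. -/
def homG : ContinuousMap.Homotopy (phibar D)
    (ContinuousMap.const (confResolution T).Realization (conePoint D)) where
  toFun := fun p => Glift D p.2 p.1
  continuous_toFun := (ContinuousMap.continuous_uncurry_of_continuous (Glift D)).comp
    (continuous_snd.prodMk continuous_fst)
  map_zero_left := by
    intro x
    induction x using Quot.ind with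
    | _ a => exact glift_zero D a
  map_one_left := by
    intro x
    induction x using Quot.ind with
    | _ a => exact glift_one D a

theorem contractible_of_contractionData' (D' : ContractionData T) :
    ContractibleSpace (confResolution T).Realization := by
  rw [contractible_iff_id_nullhomotopic]
  exact ⟨conePoint D', ⟨(homK D').trans (homG D')⟩⟩

end Part2


open Metric Set in
lemma exists_contractionData (S : Type) [TopologicalSpace S] [T2Space S]
    [ChartedSpace (EuclideanSpace ℝ (Fin 2)) S] (A : Finset S) (hA : A.Nonempty) :
    Nonempty (ContractionData {x : S // x ∉ A}) := by
  classical
  obtain ⟨a, haA⟩ := hA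
  set E := EuclideanSpace ℝ (Fin 2) with hE
  let φ := chartAt E a
  have ha : a ∈ φ.source := mem_chart_source _ a
  set c : E := φ a with hc
  -- an open set of `S` containing `a` and avoiding the other points of `A`
  set W : Set S := φ.source \ (A.erase a : Finset S) with hW
  have hWopen : IsOpen W := φ.open_source.sdiff (A.erase a).finite_toSet.isClosed
  have haW : a ∈ W := ⟨ha, by simp⟩
  set O : Set E := φ.target ∩ φ.symm ⁻¹' W with hO
  have hOopen : IsOpen O := φ.isOpen_inter_preimage_symm hWopen
  have hcO : c ∈ O := ⟨φ.map_source ha, by rw [mem_preimage, hc, φ.left_inv ha]; exact haW⟩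
  obtain ⟨ε', hε', hball⟩ := Metric.isOpen_iff.1 hOopen c hcO
  set ε : ℝ := ε' / 2 with hε
  have hεpos : 0 < ε := by positivity
  have hcb : closedBall c ε ⊆ O := fun v hv =>
    hball (lt_of_le_of_lt (mem_closedBall.1 hv) (by rw [hε]; linarith))
  have hcbT : closedBall c ε ⊆ φ.target := hcb.trans inter_subset_left
  have hcbW : ∀ v ∈ closedBall c ε, φ.symm v ∈ W := fun v hv => (hcb hv).2
  -- the compact set K
  set K : Set S := φ.symm '' closedBall c ε with hK
  have hKcomp : IsCompact K :=
    (isCompact_closedBall c ε).image_of_continuousOn (φ.continuousOn_symm.mono hcbT)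
  have hKcl : IsClosed K := hKcomp.isClosed
  have hmemK : ∀ x : S, x ∈ K ↔ x ∈ φ.source ∧ φ x ∈ closedBall c ε := by
    intro x
    constructor
    · rintro ⟨v, hv, rfl⟩
      exact ⟨φ.map_target (hcbT hv), by rw [φ.right_inv (hcbT hv)]; exact hv⟩
    · rintro ⟨hx1, hx2⟩
      exact ⟨φ x, hx2, φ.left_inv hx1⟩
  have hsymmInj : InjOn φ.symm (closedBall c ε) := fun v hv w hw h => by
    rw [← φ.right_inv (hcbT hv), ← φ.right_inv (hcbT hw), h]
  have hccb : c ∈ closedBall c ε := mem_closedBall_self hεpos.le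
  -- the model maps
  set rr : E → ℝ := fun v => ‖v - c‖ with hrr
  set scl : ℝ → E → ℝ := fun t v => 1 + t * (ε - rr v) / (2 * rr v) with hscl
  set M : ℝ → E → E := fun t v => c + scl t v • (v - c) with hM
  have hrrpos : ∀ v : E, v ≠ c → 0 < rr v := fun v hv => by
    exact norm_pos_iff.2 (sub_ne_zero.2 hv)
  have hscl_pos : ∀ (t : ℝ) (v : E), 0 ≤ t → rr v ≤ ε → v ≠ c → 0 < scl t v := by
    intro t v ht hvle hvne
    have h1 : 0 < rr v := hrrpos v hvne
    have h2 : 0 ≤ ε - rr v := by linarith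
    have : 0 ≤ t * (ε - rr v) / (2 * rr v) := by positivity
    simp only [hscl]; linarith
  have hnormM : ∀ (t : ℝ) (v : E), 0 ≤ t → rr v ≤ ε → v ≠ c →
      rr (M t v) = rr v + t * (ε - rr v) / 2 := by
    intro t v ht hvle hvne
    have h1 : 0 < rr v := hrrpos v hvne
    have : rr (M t v) = |scl t v| * rr v := by
      simp only [hM, hrr, add_sub_cancel_left, norm_smul, Real.norm_eq_abs]
    rw [this, abs_of_pos (hscl_pos t v ht hvle hvne)]
    simp only [hscl]
    field_simp
  have hnorm_le : ∀ (t : ℝ) (v : E), 0 ≤ t → t ≤ 1 → rr v ≤ ε →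
      rr v + t * (ε - rr v) / 2 ≤ ε := by
    intro t v ht ht1 hvle
    nlinarith
  have hMmem : ∀ (t : ℝ) (v : E), 0 ≤ t → t ≤ 1 → v ∈ closedBall c ε → v ≠ c →
      M t v ∈ closedBall c ε ∧ M t v ≠ c := by
    intro t v ht ht1 hv hvne
    have hvle : rr v ≤ ε := by simpa [hrr, dist_eq_norm (E := E)] using mem_closedBall.1 hv
    have h1 := hnormM t v ht hvle hvne
    have h2 : 0 < rr v := hrrpos v hvne
    constructor
    · rw [mem_closedBall, dist_eq_norm (E := E)]
      show rr (M t v) ≤ ε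
      rw [h1]
      exact hnorm_le t v ht ht1 hvle
    · intro h
      rw [h] at h1
      simp only [hrr, sub_self, norm_zero] at h1
      nlinarith
  have hMfix : ∀ (t : ℝ) (v : E), rr v = ε → M t v = v := by
    intro t v hv
    have h1 : scl t v = 1 := by
      show 1 + t * (ε - rr v) / (2 * rr v) = 1
      rw [hv]
      simp
    show c + scl t v • (v - c) = v
    rw [h1, one_smul]
    abel
  have hM0 : ∀ v : E, v ≠ c → M 0 v = v := by
    intro v hv
    have h1 : scl 0 v = 1 := by
      show 1 + 0 * (ε - rr v) / (2 * rr v) = 1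
      simp
    show c + scl 0 v • (v - c) = v
    rw [h1, one_smul]
    abel
  have hMinj : ∀ t : ℝ, 0 ≤ t → t ≤ 1 → ∀ v w : E,
      v ∈ closedBall c ε → v ≠ c → w ∈ closedBall c ε → w ≠ c → M t v = M t w → v = w := by
    intro t ht ht1 v w hv hvne hw hwne h
    have hvle : rr v ≤ ε := by simpa [hrr, dist_eq_norm (E := E)] using mem_closedBall.1 hv
    have hwle : rr w ≤ ε := by simpa [hrr, dist_eq_norm (E := E)] using mem_closedBall.1 hw
    have hnv := hnormM t v ht hvle hvne
    have hnw := hnormM t w ht hwle hwne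
    have hreq : rr v = rr w := by
      have : rr (M t v) = rr (M t w) := by rw [h]
      rw [hnv, hnw] at this
      nlinarith
    have hseq : scl t v = scl t w := by simp only [hscl, hreq]
    have hadd : c + scl t v • (v - c) = c + scl t w • (w - c) := h
    rw [← hseq] at hadd
    have : scl t v • (v - c) = scl t v • (w - c) := add_left_cancel hadd
    have hs : scl t v ≠ 0 := (hscl_pos t v ht hvle hvne).ne'
    have := smul_right_injective E hs this
    exact sub_left_injective this
  -- the space T
  set T := {x : S // x ∉ A} with hT
  have hxa : ∀ x : T, x.1 ∈ K → (x.1 ∈ φ.source ∧ φ x.1 ∈ closedBall c ε ∧ φ x.1 ≠ c) := by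
    intro x hx
    obtain ⟨h1, h2⟩ := (hmemK x.1).1 hx
    refine ⟨h1, h2, fun h => ?_⟩
    have : x.1 = a := φ.injOn h1 ha (by rw [h, hc])
    exact x.2 (this ▸ haA)
  have hsymm_notA : ∀ v ∈ closedBall c ε, v ≠ c → φ.symm v ∉ A := by
    intro v hv hvne hmem
    have hw := hcbW v hv
    have hne : φ.symm v ≠ a := by
      intro h
      exact hvne (hsymmInj hv hccb (by rw [h, hc, φ.left_inv ha]))
    exact hw.2 (Finset.mem_coe.2 (Finset.mem_erase.2 ⟨hne, hmem⟩))
  -- the homotopy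
  set Hval : unitInterval × T → S := fun p =>
    if p.2.1 ∈ K then φ.symm (M p.1 (φ p.2.1)) else p.2.1 with hHval
  have hHvalA : ∀ p, Hval p ∉ A := by
    intro p
    simp only [hHval]
    split_ifs with h
    · obtain ⟨h1, h2, h3⟩ := hxa p.2 h
      obtain ⟨hm, hne⟩ := hMmem p.1 (φ p.2.1) p.1.2.1 p.1.2.2 h2 h3
      exact hsymm_notA _ hm hne
    · exact p.2.2
  -- continuity
  have hcont : Continuous Hval := by
    apply continuous_if
    · -- frontier condition
      intro p hp
      have hKs : IsClosed {p : unitInterval × T | p.2.1 ∈ K} :=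
        hKcl.preimage (continuous_subtype_val.comp continuous_snd)
      have hpK : p.2.1 ∈ K := by
        have := frontier_subset_closure hp
        rwa [hKs.closure_eq] at this
      obtain ⟨h1, h2, h3⟩ := hxa p.2 hpK
      have hrre : rr (φ p.2.1) = ε := by
        by_contra hne
        have hlt : rr (φ p.2.1) < ε :=
          lt_of_le_of_ne (by simpa [hrr, dist_eq_norm (E := E)] using mem_closedBall.1 h2) hne
        -- then p is in the interior
        have hU : IsOpen (φ.symm '' ball c ε) :=
          φ.symm.isOpen_image_of_subset_source isOpen_ball
            (ball_subset_closedBall.trans hcbT)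
        have hpU : p ∈ {q : unitInterval × T | q.2.1 ∈ φ.symm '' ball c ε} :=
          ⟨φ p.2.1, by rwa [mem_ball, dist_eq_norm (E := E)], φ.left_inv h1⟩
        have hUopen : IsOpen {q : unitInterval × T | q.2.1 ∈ φ.symm '' ball c ε} :=
          hU.preimage (continuous_subtype_val.comp continuous_snd)
        have hsubK : {q : unitInterval × T | q.2.1 ∈ φ.symm '' ball c ε} ⊆
            {q : unitInterval × T | q.2.1 ∈ K} := fun q hq => by
          obtain ⟨v, hv, hv2⟩ := hq
          exact ⟨v, ball_subset_closedBall hv, hv2⟩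
        have : p ∈ interior {q : unitInterval × T | q.2.1 ∈ K} :=
          interior_maximal hsubK hUopen hpU
        exact (hp.2 : p ∉ interior _) this
      rw [hMfix _ _ hrre, φ.left_inv h1]
    · -- continuity on the K part
      have hKs : IsClosed {p : unitInterval × T | p.2.1 ∈ K} :=
        hKcl.preimage (continuous_subtype_val.comp continuous_snd)
      rw [hKs.closure_eq]
      set s2 : Set (ℝ × E) := {q | q.2 ∈ closedBall c ε ∧ q.2 ≠ c ∧ 0 ≤ q.1 ∧ q.1 ≤ 1} with hs2
      have hMcont : ContinuousOn (fun q : ℝ × E => M q.1 q.2) s2 := by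
        have hden : ContinuousOn (fun q : ℝ × E => 2 * rr q.2) s2 :=
          (continuous_const.mul ((continuous_snd.sub continuous_const).norm)).continuousOn
      
        have hquo : ContinuousOn (fun q : ℝ × E => q.1 * (ε - rr q.2) / (2 * rr q.2)) s2 := by
          apply ContinuousOn.div
          · exact (continuous_fst.mul (continuous_const.sub
              (continuous_snd.sub continuous_const).norm)).continuousOn
          · exact hden
          · intro q hq
            have := hrrpos q.2 hq.2.1
            positivity
        exact continuousOn_const.add (((continuousOn_const.add hquo).smul
          (continuous_snd.sub continuous_const).continuousOn))
      have hinner : ContinuousOn (fun p : unitInterval × T => ((p.1 : ℝ), φ p.2.1))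
          {p : unitInterval × T | p.2.1 ∈ K} := by
        apply ContinuousOn.prodMk
        · exact (continuous_subtype_val.comp continuous_fst).continuousOn
        · exact φ.continuousOn.comp (continuous_subtype_val.comp continuous_snd).continuousOn
            (fun p hp => (hxa p.2 hp).1)
      have hmaps1 : MapsTo (fun p : unitInterval × T => ((p.1 : ℝ), φ p.2.1))
          {p : unitInterval × T | p.2.1 ∈ K} s2 := by
        intro p hp
        obtain ⟨h1, h2, h3⟩ := hxa p.2 hp
        exact ⟨h2, h3, p.1.2.1, p.1.2.2⟩
      have hmaps2 : MapsTo (fun q : ℝ × E => M q.1 q.2) s2 φ.target := by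
        intro q hq
        exact hcbT (hMmem q.1 q.2 hq.2.2.1 hq.2.2.2 hq.1 hq.2.1).1
      have := (φ.continuousOn_symm.comp (hMcont.comp hinner hmaps1)
        (hmaps2.comp hmaps1))
      exact this
    · exact (continuous_subtype_val.comp continuous_snd).continuousOn
  -- package
  refine ⟨⟨fun p => ⟨Hval p, hHvalA p⟩, hcont.subtype_mk _, ?_, ?_, ?_, ?_⟩⟩
  · -- injectivity
    intro t x y hxy
    have h : Hval (t, x) = Hval (t, y) := congrArg Subtype.val hxy
    by_cases hx : x.1 ∈ K <;> by_cases hy : y.1 ∈ K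
    · obtain ⟨hx1, hx2, hx3⟩ := hxa x hx
      obtain ⟨hy1, hy2, hy3⟩ := hxa y hy
      simp only [hHval, if_pos hx, if_pos hy] at h
      have hMx := hMmem (t : ℝ) (φ x.1) t.2.1 t.2.2 hx2 hx3
      have hMy := hMmem (t : ℝ) (φ y.1) t.2.1 t.2.2 hy2 hy3
      have := hsymmInj hMx.1 hMy.1 h
      have := hMinj (t : ℝ) t.2.1 t.2.2 _ _ hx2 hx3 hy2 hy3 this
      apply Subtype.ext
      rw [← φ.left_inv hx1, ← φ.left_inv hy1, this]
    · exfalso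
      simp only [hHval, if_pos hx, if_neg hy] at h
      obtain ⟨hx1, hx2, hx3⟩ := hxa x hx
      have hMx := hMmem (t : ℝ) (φ x.1) t.2.1 t.2.2 hx2 hx3
      exact hy (h ▸ ⟨M (t : ℝ) (φ x.1), hMx.1, rfl⟩)
    · exfalso
      simp only [hHval, if_neg hx, if_pos hy] at h
      obtain ⟨hy1, hy2, hy3⟩ := hxa y hy
      have hMy := hMmem (t : ℝ) (φ y.1) t.2.1 t.2.2 hy2 hy3
      exact hx (h ▸ ⟨M (t : ℝ) (φ y.1), hMy.1, rfl⟩)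
    · simp only [hHval, if_neg hx, if_neg hy] at h
      exact Subtype.ext h
  · -- H 0 = id
    intro x
    apply Subtype.ext
    simp only [hHval]
    split_ifs with h
    · obtain ⟨h1, h2, h3⟩ := hxa x h
      have : ((0 : unitInterval) : ℝ) = 0 := rfl
      rw [this, hM0 _ h3, φ.left_inv h1]
    · rfl
  · -- the point q
    refine ⟨φ.symm (c + (ε/4) • EuclideanSpace.single (0 : Fin 2) (1 : ℝ)), ?_⟩
    have hw0 : rr (c + (ε/4) • EuclideanSpace.single (0 : Fin 2) (1 : ℝ)) = ε/4 := by
      show ‖c + (ε/4) • EuclideanSpace.single (0 : Fin 2) (1 : ℝ) - c‖ = ε/4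
      rw [add_sub_cancel_left, norm_smul, Real.norm_eq_abs, EuclideanSpace.norm_single,
        abs_of_pos (by positivity : (0:ℝ) < ε/4)]
      norm_num
    have hw0cb : c + (ε/4) • EuclideanSpace.single (0 : Fin 2) (1 : ℝ) ∈ closedBall c ε := by
      rw [mem_closedBall, dist_eq_norm (E := E)]
      rw [show ‖c + (ε/4) • EuclideanSpace.single (0 : Fin 2) (1:ℝ) - c‖ = rr _ from rfl, hw0]
      linarith
    have hw0ne : c + (ε/4) • EuclideanSpace.single (0 : Fin 2) (1 : ℝ) ≠ c := by
      intro h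
      rw [h] at hw0
      simp only [hrr, sub_self, norm_zero] at hw0
      linarith
    exact hsymm_notA _ hw0cb hw0ne
  · -- q not in the image of H 1
    intro x h
    have hval := congrArg Subtype.val h
    simp only at hval
    set w0 : E := c + (ε/4) • EuclideanSpace.single (0 : Fin 2) (1 : ℝ) with hw0def
    have hw0 : rr w0 = ε/4 := by
      show ‖w0 - c‖ = ε/4
      rw [hw0def, add_sub_cancel_left, norm_smul, Real.norm_eq_abs, EuclideanSpace.norm_single,
        abs_of_pos (by positivity : (0:ℝ) < ε/4)]
      norm_num
    have hw0cb : w0 ∈ closedBall c ε := by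
      rw [mem_closedBall, dist_eq_norm (E := E)]
      rw [show ‖w0 - c‖ = rr w0 from rfl, hw0]
      linarith
    by_cases hx : x.1 ∈ K
    · obtain ⟨h1, h2, h3⟩ := hxa x hx
      simp only [hHval, if_pos hx] at hval
      have h1r : ((1 : unitInterval) : ℝ) = 1 := rfl
      rw [h1r] at hval
      have hMx := hMmem 1 (φ x.1) zero_le_one le_rfl h2 h3
      have := hsymmInj hMx.1 hw0cb hval
      have hrle : rr (φ x.1) ≤ ε := by simpa [hrr, dist_eq_norm (E := E)] using mem_closedBall.1 h2
      have hn := hnormM 1 (φ x.1) zero_le_one hrle h3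
      rw [this, hw0] at hn
      have := hrrpos (φ x.1) h3
      nlinarith
    · simp only [hHval, if_neg hx] at hval
      apply hx
      rw [hval]
      exact ⟨w0, hw0cb, rfl⟩


/-! ## Statement 7

Let `T` be a connected open surface obtained by removing a finite nonempty configuration
of points from a surface `S` (such a `T` is homotopy equivalent to a compact subsurface
`S' ⊂ T` with `T − S'` nonempty).  Then the geometric realisation `‖F(T)_•‖` of the
semi-simplicial space of configurations of distinct points of `T` is contractible. -/
theorem confResolution_realization_contractible
    (S : Type) [TopologicalSpace S] [T2Space S] [SecondCountableTopology S]
    [ChartedSpace (EuclideanSpace ℝ (Fin 2)) S]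
    (A : Finset S) (hA : A.Nonempty) [ConnectedSpace {x : S // x ∉ A}] :
    ContractibleSpace (confResolution {x : S // x ∉ A}).Realization := by
  obtain ⟨D⟩ := exists_contractionData S A hA
  exact contractible_of_contractionData' D
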